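/- Let $\Theta_i, \Theta_j, \Theta_k \in [0, \pi)$ satisfy $\Theta_i + \Theta_j + \Theta_k \leq \pi$. Then for any $r_i, r_j, r_k > 0$, the hyperbolic lengths $l_{ij} = \operatorname{arcosh}\big(\cosh r_i \cosh r_j + \sinh r_i \sinh r_j \cos\Theta_k\big)$ (and cyclically $l_{jk}, l_{ki}$ with angles $\Theta_i, \Theta_j$ respectively) satisfy the strict triangle inequalities $l_{ij} < l_{jk} + l_{ki}$, $l_{jk} < l_{ki} + l_{ij}$, $l_{ki} < l_{ij} + l_{jk}$. -/

import Mathlib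

open Real

/-- Inverse hyperbolic cosine. -/
noncomputable def arcosh (x : ℝ) : ℝ := Real.log (x + Real.sqrt (x ^ 2 - 1))

lemma arcosh_nonneg {x : ℝ} (hx : 1 ≤ x) : 0 ≤ _root_.arcosh x := by
  have := Real.sqrt_nonneg (x ^ 2 - 1)
  exact Real.log_nonneg (by linarith)

lemma cosh_arcosh {x : ℝ} (hx : 1 ≤ x) : Real.cosh (_root_.arcosh x) = x := by
  have h1 : 0 ≤ x ^ 2 - 1 := by nlinarith
  have hs : Real.sqrt (x ^ 2 - 1) ^ 2 = x ^ 2 - 1 := Real.sq_sqrt h1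
  have hsn : 0 ≤ Real.sqrt (x ^ 2 - 1) := Real.sqrt_nonneg _
  have hy : 0 < x + Real.sqrt (x ^ 2 - 1) := by linarith
  have hinv : (x + Real.sqrt (x ^ 2 - 1))⁻¹ = x - Real.sqrt (x ^ 2 - 1) := by
    refine inv_eq_of_mul_eq_one_right ?_
    nlinarith [hs]
  rw [_root_.arcosh, Real.cosh_eq, Real.exp_log hy, Real.exp_neg, Real.exp_log hy, hinv]
  ring

lemma sinh_arcosh {x : ℝ} (hx : 1 ≤ x) :
    Real.sinh (_root_.arcosh x) = Real.sqrt (x ^ 2 - 1) := by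
  have h1 : 0 ≤ x ^ 2 - 1 := by nlinarith
  have hs : Real.sqrt (x ^ 2 - 1) ^ 2 = x ^ 2 - 1 := Real.sq_sqrt h1
  have hsn : 0 ≤ Real.sqrt (x ^ 2 - 1) := Real.sqrt_nonneg _
  have hy : 0 < x + Real.sqrt (x ^ 2 - 1) := by linarith
  have hinv : (x + Real.sqrt (x ^ 2 - 1))⁻¹ = x - Real.sqrt (x ^ 2 - 1) := by
    refine inv_eq_of_mul_eq_one_right ?_
    nlinarith [hs]
  rw [_root_.arcosh, Real.sinh_eq, Real.exp_log hy, Real.exp_neg, Real.exp_log hy, hinv]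
  ring

/-- Each center distance argument exceeds 1. -/
lemma one_lt_c {ai aj bi bj xk : ℝ} (hai : ai ^ 2 = 1 + bi ^ 2)
    (haj : aj ^ 2 = 1 + bj ^ 2) (hai0 : 0 < ai) (haj0 : 0 < aj)
    (hbi : 0 < bi) (hbj : 0 < bj) (hxk : -1 < xk) :
    1 < ai * aj + bi * bj * xk := by
  have h4 : (1 + bi * bj) ^ 2 ≤ (ai * aj) ^ 2 := by nlinarith [sq_nonneg (bi - bj)]
  have h5 : 1 + bi * bj ≤ ai * aj := by
    nlinarith [mul_pos hai0 haj0, mul_pos hbi hbj]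
  nlinarith [mul_pos (mul_pos hbi hbj) (by linarith : (0:ℝ) < 1 + xk)]

set_option maxHeartbeats 1000000 in
/-- The Gram-determinant inequality: key algebraic step. -/
lemma key_ineq {ai aj ak bi bj bk xi xj xk : ℝ}
    (hai : ai ^ 2 = 1 + bi ^ 2) (haj : aj ^ 2 = 1 + bj ^ 2) (hak : ak ^ 2 = 1 + bk ^ 2)
    (hai0 : 0 < ai) (haj0 : 0 < aj) (hak0 : 0 < ak)
    (hbi : 0 < bi) (hbj : 0 < bj) (hbk : 0 < bk)
    (hxi : -1 < xi) (hxi1 : xi ≤ 1) (hxj : -1 < xj) (hxj1 : xj ≤ 1)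
    (hxk : -1 < xk) (hxk1 : xk ≤ 1)
    (h1 : 0 ≤ xi + xj * xk) (h2 : 0 ≤ xj + xk * xi) (h3 : 0 ≤ xk + xi * xj) :
    (ai * aj + bi * bj * xk) ^ 2 + (aj * ak + bj * bk * xi) ^ 2
      + (ak * ai + bk * bi * xj) ^ 2
      < 1 + 2 * (ai * aj + bi * bj * xk) * (aj * ak + bj * bk * xi)
        * (ak * ai + bk * bi * xj) := by
  have hpp : -1 < xi * xj := by
    nlinarith [mul_pos (by linarith : (0:ℝ) < 1 + xi) (by linarith : (0:ℝ) < 1 + xj),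
      mul_nonneg (by linarith : (0:ℝ) ≤ 1 - xi) (by linarith : (0:ℝ) ≤ 1 - xj)]
  have hpp1 : xi * xj ≤ 1 := by nlinarith [sq_nonneg (xi - xj), sq_nonneg (xi + xj)]
  have hprod : -1 < xi * xj * xk := by
    nlinarith [mul_pos (by linarith : (0:ℝ) < 1 + xi * xj) (by linarith : (0:ℝ) < 1 + xk),
      mul_nonneg (by linarith : (0:ℝ) ≤ 1 - xi * xj) (by linarith : (0:ℝ) ≤ 1 - xk)]
  have hid : 1 + 2 * (ai * aj + bi * bj * xk) * (aj * ak + bj * bk * xi)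
        * (ak * ai + bk * bi * xj)
      - ((ai * aj + bi * bj * xk) ^ 2 + (aj * ak + bj * bk * xi) ^ 2
        + (ak * ai + bk * bi * xj) ^ 2)
      = bj ^ 2 * bk ^ 2 * (1 - xi ^ 2) + bi ^ 2 * bk ^ 2 * (1 - xj ^ 2)
        + bi ^ 2 * bj ^ 2 * (1 - xk ^ 2)
        + 2 * bi ^ 2 * bj ^ 2 * bk ^ 2 * (1 + xi * xj * xk)
        + 2 * aj * ak * bi ^ 2 * bj * bk * (xi + xj * xk)
        + 2 * ai * ak * bi * bj ^ 2 * bk * (xj + xi * xk)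
        + 2 * ai * aj * bi * bj * bk ^ 2 * (xk + xi * xj) := by
    linear_combination (-ak ^ 2 + 2 * aj * ak * bj * bk * xi - aj ^ 2
        + 2 * aj ^ 2 * ak ^ 2) * hai
      + (-1 - bi ^ 2 + ak ^ 2 + 2 * ak ^ 2 * bi ^ 2 + 2 * ai * ak * bi * bk * xj) * haj
      + (bj ^ 2 + bi ^ 2 + 2 * bi ^ 2 * bj ^ 2 + 2 * ai * aj * bi * bj * xk) * hak
  have t1 : 0 ≤ bj ^ 2 * bk ^ 2 * (1 - xi ^ 2) := by
    have : 0 ≤ 1 - xi ^ 2 := by nlinarith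
    positivity
  have t2 : 0 ≤ bi ^ 2 * bk ^ 2 * (1 - xj ^ 2) := by
    have : 0 ≤ 1 - xj ^ 2 := by nlinarith
    positivity
  have t3 : 0 ≤ bi ^ 2 * bj ^ 2 * (1 - xk ^ 2) := by
    have : 0 ≤ 1 - xk ^ 2 := by nlinarith
    positivity
  have t4 : 0 < 2 * bi ^ 2 * bj ^ 2 * bk ^ 2 * (1 + xi * xj * xk) := by
    have : 0 < 1 + xi * xj * xk := by linarith
    positivity
  have he2 : 0 ≤ xj + xi * xk := by nlinarith
  have t5 : 0 ≤ 2 * aj * ak * bi ^ 2 * bj * bk * (xi + xj * xk) :=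
    mul_nonneg (by positivity) h1
  have t6 : 0 ≤ 2 * ai * ak * bi * bj ^ 2 * bk * (xj + xi * xk) :=
    mul_nonneg (by positivity) he2
  have t7 : 0 ≤ 2 * ai * aj * bi * bj * bk ^ 2 * (xk + xi * xj) :=
    mul_nonneg (by positivity) h3
  linarith [hid, t1, t2, t3, t4, t5, t6, t7]

/-- One triangle inequality from the Gram inequality. -/
lemma tri_of_gram {c1 c2 c3 : ℝ} (h1 : 1 < c1) (h2 : 1 < c2) (h3 : 1 < c3)
    (hQ : c1 ^ 2 + c2 ^ 2 + c3 ^ 2 < 1 + 2 * c1 * c2 * c3) :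
    _root_.arcosh c1 < _root_.arcosh c2 + _root_.arcosh c3 := by
  have h1' := h1.le
  have h2' := h2.le
  have h3' := h3.le
  have hn2 : 0 ≤ c2 ^ 2 - 1 := by nlinarith
  have hn3 : 0 ≤ c3 ^ 2 - 1 := by nlinarith
  have hs2 : Real.sqrt (c2 ^ 2 - 1) ^ 2 = c2 ^ 2 - 1 := Real.sq_sqrt hn2
  have hs3 : Real.sqrt (c3 ^ 2 - 1) ^ 2 = c3 ^ 2 - 1 := Real.sq_sqrt hn3
  have hS : 0 ≤ Real.sqrt (c2 ^ 2 - 1) * Real.sqrt (c3 ^ 2 - 1) :=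
    mul_nonneg (Real.sqrt_nonneg _) (Real.sqrt_nonneg _)
  have hlt : c1 < c2 * c3 + Real.sqrt (c2 ^ 2 - 1) * Real.sqrt (c3 ^ 2 - 1) := by
    have hsq : (c1 - c2 * c3) ^ 2
        < (Real.sqrt (c2 ^ 2 - 1) * Real.sqrt (c3 ^ 2 - 1)) ^ 2 := by
      rw [mul_pow, hs2, hs3]
      nlinarith
    have := lt_of_pow_lt_pow_left₀ 2 hS hsq
    linarith
  have hcosh : Real.cosh (_root_.arcosh c1) < Real.cosh (_root_.arcosh c2 + _root_.arcosh c3) := by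
    rw [Real.cosh_add, _root_.cosh_arcosh h1', _root_.cosh_arcosh h2', _root_.cosh_arcosh h3',
      _root_.sinh_arcosh h2', _root_.sinh_arcosh h3']
    exact hlt
  have habs := Real.cosh_lt_cosh.mp hcosh
  have hnn : 0 ≤ _root_.arcosh c2 + _root_.arcosh c3 := by
    linarith [_root_.arcosh_nonneg h2', _root_.arcosh_nonneg h3']
  calc _root_.arcosh c1 ≤ |_root_.arcosh c1| := le_abs_self _
    _ < |_root_.arcosh c2 + _root_.arcosh c3| := habs
    _ = _root_.arcosh c2 + _root_.arcosh c3 := abs_of_nonneg hnn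

set_option maxHeartbeats 2000000 in
/-- Hyperbolic three-circle configuration lemma, case `Θi + Θj + Θk ≤ π`: the
hyperbolic center distances satisfy the strict triangle inequalities. -/
theorem stmt_17 (Θi Θj Θk : ℝ)
    (hi : Θi ∈ Set.Ico 0 π) (hj : Θj ∈ Set.Ico 0 π) (hk : Θk ∈ Set.Ico 0 π)
    (hsum : Θi + Θj + Θk ≤ π)
    (ri rj rk : ℝ) (hri : 0 < ri) (hrj : 0 < rj) (hrk : 0 < rk) :
    let lij := _root_.arcosh (Real.cosh ri * Real.cosh rj + Real.sinh ri * Real.sinh rj * Real.cos Θk)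
    let ljk := _root_.arcosh (Real.cosh rj * Real.cosh rk + Real.sinh rj * Real.sinh rk * Real.cos Θi)
    let lki := _root_.arcosh (Real.cosh rk * Real.cosh ri + Real.sinh rk * Real.sinh ri * Real.cos Θj)
    lij < ljk + lki ∧ ljk < lki + lij ∧ lki < lij + ljk := by
  intro lij ljk lki
  obtain ⟨hi0, hiπ⟩ := hi
  obtain ⟨hj0, hjπ⟩ := hj
  obtain ⟨hk0, hkπ⟩ := hk
  -- cosine bounds
  have hxi1 : Real.cos Θi ≤ 1 := Real.cos_le_one _
  have hxj1 : Real.cos Θj ≤ 1 := Real.cos_le_one _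
  have hxk1 : Real.cos Θk ≤ 1 := Real.cos_le_one _
  have hxi : -1 < Real.cos Θi := by
    have := Real.cos_lt_cos_of_nonneg_of_le_pi hi0 le_rfl hiπ
    rwa [Real.cos_pi] at this
  have hxj : -1 < Real.cos Θj := by
    have := Real.cos_lt_cos_of_nonneg_of_le_pi hj0 le_rfl hjπ
    rwa [Real.cos_pi] at this
  have hxk : -1 < Real.cos Θk := by
    have := Real.cos_lt_cos_of_nonneg_of_le_pi hk0 le_rfl hkπ
    rwa [Real.cos_pi] at this
  have hsi : 0 ≤ Real.sin Θi := Real.sin_nonneg_of_nonneg_of_le_pi hi0 hiπ.le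
  have hsj : 0 ≤ Real.sin Θj := Real.sin_nonneg_of_nonneg_of_le_pi hj0 hjπ.le
  have hsk : 0 ≤ Real.sin Θk := Real.sin_nonneg_of_nonneg_of_le_pi hk0 hkπ.le
  -- angle-sum consequences
  have h1 : 0 ≤ Real.cos Θi + Real.cos Θj * Real.cos Θk := by
    have hc : Real.cos (π - (Θj + Θk)) ≤ Real.cos Θi :=
      Real.cos_le_cos_of_nonneg_of_le_pi hi0 (by linarith) (by linarith)
    rw [Real.cos_pi_sub, Real.cos_add] at hc
    nlinarith [mul_nonneg hsj hsk]
  have h2 : 0 ≤ Real.cos Θj + Real.cos Θk * Real.cos Θi := by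
    have hc : Real.cos (π - (Θk + Θi)) ≤ Real.cos Θj :=
      Real.cos_le_cos_of_nonneg_of_le_pi hj0 (by linarith) (by linarith)
    rw [Real.cos_pi_sub, Real.cos_add] at hc
    nlinarith [mul_nonneg hsk hsi]
  have h3 : 0 ≤ Real.cos Θk + Real.cos Θi * Real.cos Θj := by
    have hc : Real.cos (π - (Θi + Θj)) ≤ Real.cos Θk :=
      Real.cos_le_cos_of_nonneg_of_le_pi hk0 (by linarith) (by linarith)
    rw [Real.cos_pi_sub, Real.cos_add] at hc
    nlinarith [mul_nonneg hsi hsj]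
  -- hyperbolic setup
  have hai : Real.cosh ri ^ 2 = 1 + Real.sinh ri ^ 2 := by
    rw [Real.cosh_sq]; ring
  have haj : Real.cosh rj ^ 2 = 1 + Real.sinh rj ^ 2 := by
    rw [Real.cosh_sq]; ring
  have hak : Real.cosh rk ^ 2 = 1 + Real.sinh rk ^ 2 := by
    rw [Real.cosh_sq]; ring
  have hai0 : 0 < Real.cosh ri := Real.cosh_pos ri
  have haj0 : 0 < Real.cosh rj := Real.cosh_pos rj
  have hak0 : 0 < Real.cosh rk := Real.cosh_pos rk
  have hbi : 0 < Real.sinh ri := Real.sinh_pos_iff.mpr hri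
  have hbj : 0 < Real.sinh rj := Real.sinh_pos_iff.mpr hrj
  have hbk : 0 < Real.sinh rk := Real.sinh_pos_iff.mpr hrk
  have hc1 : 1 < Real.cosh ri * Real.cosh rj + Real.sinh ri * Real.sinh rj * Real.cos Θk :=
    one_lt_c hai haj hai0 haj0 hbi hbj hxk
  have hc2 : 1 < Real.cosh rj * Real.cosh rk + Real.sinh rj * Real.sinh rk * Real.cos Θi :=
    one_lt_c haj hak haj0 hak0 hbj hbk hxi
  have hc3 : 1 < Real.cosh rk * Real.cosh ri + Real.sinh rk * Real.sinh ri * Real.cos Θj :=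
    one_lt_c hak hai hak0 hai0 hbk hbi hxj
  have hQ := key_ineq hai haj hak hai0 haj0 hak0 hbi hbj hbk hxi hxi1 hxj hxj1 hxk hxk1
    h1 h2 h3
  refine ⟨?_, ?_, ?_⟩
  · exact tri_of_gram hc1 hc2 hc3 (by linarith [hQ])
  · have := tri_of_gram hc2 hc3 hc1 (by linarith [hQ])
    linarith
  · have := tri_of_gram hc3 hc1 hc2 (by linarith [hQ])
    linarith
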